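/- Let a > 0 and let f, g : [0,a] → ℝ be continuous functions such that f is monotone nondecreasing on [0,a] and g is monotone nonincreasing on [0,a]. Then ∫₀ᵃ f(t)·g(t) dt = ∫₀ᵃ f(t)·g(a−t) dt if and only if f is constant on [0,a] or g is constant on [0,a]. -/
import Mathlib


open Real Set intervalIntegral

/-- Equality case of the integral permutation (rearrangement) inequality:
if `f` is nondecreasing and `g` is nonincreasing on `[0, a]`, then
`∫₀ᵃ f·g = ∫₀ᵃ f(t)·g(a−t) dt` if and only if `f` or `g` is constant on `[0, a]`. -/
theorem integral_permutation_equality_iff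
    (a : ℝ) (ha : 0 < a) (f g : ℝ → ℝ)
    (hfc : ContinuousOn f (Set.Icc 0 a)) (hgc : ContinuousOn g (Set.Icc 0 a))
    (hf : MonotoneOn f (Set.Icc 0 a)) (hg : AntitoneOn g (Set.Icc 0 a)) :
    (∫ t in (0:ℝ)..a, f t * g t) = (∫ t in (0:ℝ)..a, f t * g (a - t)) ↔
      (∃ c : ℝ, ∀ t ∈ Set.Icc 0 a, f t = c) ∨ (∃ c : ℝ, ∀ t ∈ Set.Icc 0 a, g t = c) := by
  have hmap : MapsTo (fun t => a - t) (Icc (0:ℝ) a) (Icc (0:ℝ) a) := by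
    intro t ht
    simp only [mem_Icc] at ht ⊢
    constructor <;> linarith [ht.1, ht.2]
  have hsub : ∀ F : ℝ → ℝ, (∫ t in (0:ℝ)..a, F (a - t)) = ∫ t in (0:ℝ)..a, F t := by
    intro F
    rw [intervalIntegral.integral_comp_sub_left F a, sub_self, sub_zero]
  have hcsub : ContinuousOn (fun t : ℝ => a - t) (Icc (0:ℝ) a) :=
    (continuousOn_const.sub continuousOn_id)
  have hfc' : ContinuousOn (fun t => f (a - t)) (Icc (0:ℝ) a) := hfc.comp hcsub hmap
  have hgc' : ContinuousOn (fun t => g (a - t)) (Icc (0:ℝ) a) := hgc.comp hcsub hmap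
  -- integrability of the four products
  have hu : uIcc (0:ℝ) a = Icc 0 a := uIcc_of_le ha.le
  have int1 : IntervalIntegrable (fun t => f t * g t) MeasureTheory.volume 0 a := by
    apply ContinuousOn.intervalIntegrable; rw [hu]; exact hfc.mul hgc
  have int2 : IntervalIntegrable (fun t => f t * g (a - t)) MeasureTheory.volume 0 a := by
    apply ContinuousOn.intervalIntegrable; rw [hu]; exact hfc.mul hgc'
  have int3 : IntervalIntegrable (fun t => f (a - t) * g t) MeasureTheory.volume 0 a := by
    apply ContinuousOn.intervalIntegrable; rw [hu]; exact hfc'.mul hgc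
  have int4 : IntervalIntegrable (fun t => f (a - t) * g (a - t)) MeasureTheory.volume 0 a := by
    apply ContinuousOn.intervalIntegrable; rw [hu]; exact hfc'.mul hgc'
  -- the two substitution identities
  have h1 : (∫ t in (0:ℝ)..a, f (a - t) * g t) = ∫ t in (0:ℝ)..a, f t * g (a - t) := by
    have := hsub (fun x => f x * g (a - x))
    simpa [sub_sub_cancel] using this
  have h2 : (∫ t in (0:ℝ)..a, f (a - t) * g (a - t)) = ∫ t in (0:ℝ)..a, f t * g t :=
    hsub (fun x => f x * g x)
  -- key identity : ∫ p = 2 (J - I)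
  set p : ℝ → ℝ := fun t => (f (a - t) - f t) * (g t - g (a - t)) with hp
  have hpc : ContinuousOn p (Icc (0:ℝ) a) := (hfc'.sub hfc).mul (hgc.sub hgc')
  have hpint : IntervalIntegrable p MeasureTheory.volume 0 a := by
    apply ContinuousOn.intervalIntegrable; rw [hu]; exact hpc
  have key : (∫ t in (0:ℝ)..a, p t) =
      2 * ((∫ t in (0:ℝ)..a, f t * g (a - t)) - ∫ t in (0:ℝ)..a, f t * g t) := by
    have expand : ∀ t : ℝ, p t =
        f (a - t) * g t + f t * g (a - t) - f (a - t) * g (a - t) - f t * g t := by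
      intro t; simp only [hp]; ring
    calc (∫ t in (0:ℝ)..a, p t)
        = ∫ t in (0:ℝ)..a, (f (a - t) * g t + f t * g (a - t)
            - f (a - t) * g (a - t) - f t * g t) := by
          exact intervalIntegral.integral_congr fun t _ => expand t
      _ = (∫ t in (0:ℝ)..a, f (a - t) * g t) + (∫ t in (0:ℝ)..a, f t * g (a - t))
            - (∫ t in (0:ℝ)..a, f (a - t) * g (a - t)) - ∫ t in (0:ℝ)..a, f t * g t := by
          rw [intervalIntegral.integral_sub ((int3.add int2).sub int4) int1,
            intervalIntegral.integral_sub (int3.add int2) int4,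
            intervalIntegral.integral_add int3 int2]
      _ = 2 * ((∫ t in (0:ℝ)..a, f t * g (a - t)) - ∫ t in (0:ℝ)..a, f t * g t) := by
          rw [h1, h2]; ring
  -- nonnegativity of p on [0, a]
  have hpnonneg : ∀ t ∈ Icc (0:ℝ) a, 0 ≤ p t := by
    intro t ht
    have hat : a - t ∈ Icc (0:ℝ) a := hmap ht
    show 0 ≤ (f (a - t) - f t) * (g t - g (a - t))
    rcases le_total t (a - t) with h | h
    · exact mul_nonneg (sub_nonneg.2 (hf ht hat h)) (sub_nonneg.2 (hg ht hat h))
    · have h1 := sub_nonpos.2 (hf hat ht h)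
      have h2 := sub_nonpos.2 (hg hat ht h)
      nlinarith
  constructor
  · -- equality implies constancy
    intro hIJ
    by_contra hcon
    push_neg at hcon
    obtain ⟨hcf, hcg⟩ := hcon
    have h0a : (0:ℝ) ∈ Icc (0:ℝ) a := ⟨le_refl _, ha.le⟩
    have haa : a ∈ Icc (0:ℝ) a := ⟨ha.le, le_refl _⟩
    have hfa : f 0 < f a := by
      rcases lt_or_eq_of_le (hf h0a haa ha.le) with h | h
      · exact h
      · exfalso
        obtain ⟨t, ht, hne⟩ := hcf (f 0)
        exact hne (le_antisymm (h ▸ hf ht haa ht.2) (hf h0a ht ht.1))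
    have hga : g a < g 0 := by
      rcases lt_or_eq_of_le (hg h0a haa ha.le) with h | h
      · exact h
      · exfalso
        obtain ⟨t, ht, hne⟩ := hcg (g 0)
        exact hne (le_antisymm (hg h0a ht ht.1) (by rw [← h]; exact hg ht haa ht.2))
    have hp0 : 0 < p 0 := by
      have : p 0 = (f a - f 0) * (g 0 - g a) := by simp [hp]
      rw [this]
      exact mul_pos (by linarith) (by linarith)
    have hlt : (∫ t in (0:ℝ)..a, (0:ℝ)) < ∫ t in (0:ℝ)..a, p t := by
      apply intervalIntegral.integral_lt_integral_of_continuousOn_of_le_of_exists_lt ha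
        continuousOn_const hpc
      · intro x hx; exact hpnonneg x ⟨hx.1.le, hx.2⟩
      · exact ⟨0, h0a, hp0⟩
    rw [intervalIntegral.integral_const, smul_zero] at hlt
    rw [key, hIJ] at hlt
    simp at hlt
  · -- constancy implies equality
    rintro (⟨c, hc⟩ | ⟨c, hc⟩)
    · have e1 : (∫ t in (0:ℝ)..a, f t * g t) = ∫ t in (0:ℝ)..a, c * g t := by
        apply intervalIntegral.integral_congr
        intro t ht; rw [hu] at ht; simp [hc t ht]
      have e2 : (∫ t in (0:ℝ)..a, f t * g (a - t)) = ∫ t in (0:ℝ)..a, c * g (a - t) := by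
        apply intervalIntegral.integral_congr
        intro t ht; rw [hu] at ht; simp [hc t ht]
      rw [e1, e2]
      have := hsub (fun x => c * g x)
      rw [this]
    · have e1 : (∫ t in (0:ℝ)..a, f t * g t) = ∫ t in (0:ℝ)..a, f t * c := by
        apply intervalIntegral.integral_congr
        intro t ht; rw [hu] at ht; simp [hc t ht]
      have e2 : (∫ t in (0:ℝ)..a, f t * g (a - t)) = ∫ t in (0:ℝ)..a, f t * c := by
        apply intervalIntegral.integral_congr
        intro t ht; rw [hu] at ht; simp [hc (a - t) (hmap ht)]
      rw [e1, e2]
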